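/- Fix n ≥ 1 and π ∈ ℕ^n with π_1 ≥ 1. Let Comp(π) be the set of tuples τ ∈ ℕ^n with τ_j ≤ π_j for all j and Σ_j τ_j = π_1. Define the square matrix M_π indexed by Comp(π) with entries M_π(ρ,τ) = (-1)^{π_1 - ρ_1} · Π_{j=2}^n C(τ_j, ρ_j). Then M_π² is the identity matrix. -/

import Mathlib

open Finset

/-- Key orthogonality: ∑_t (-1)^t C(t,r) C(s,t) = (-1)^s δ_{rs}. -/
lemma key_binom (N r s : ℕ) (hs : s ≤ N) :
    ∑ t ∈ Finset.range (N + 1),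
      (-1 : ℚ) ^ t * (Nat.choose t r : ℚ) * (Nat.choose s t : ℚ)
      = if r = s then (-1 : ℚ) ^ s else 0 := by
  have h1 : ∑ t ∈ Finset.range (N + 1),
      (-1 : ℚ) ^ t * (Nat.choose t r : ℚ) * (Nat.choose s t : ℚ)
      = ∑ t ∈ Finset.range (s + 1),
      (-1 : ℚ) ^ t * (Nat.choose t r : ℚ) * (Nat.choose s t : ℚ) := by
    refine (Finset.sum_subset (Finset.range_subset_range.mpr (by omega)) ?_).symm
    intro t _ ht
    have : s < t := by simpa using ht
    simp [Nat.choose_eq_zero_of_lt this]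
  rw [h1]
  by_cases hrs : s < r
  · rw [if_neg (by omega)]
    refine Finset.sum_eq_zero fun t ht => ?_
    have : t < r := by have := Finset.mem_range.mp ht; omega
    simp [Nat.choose_eq_zero_of_lt this]
  · push_neg at hrs
    have hsplit : ∑ t ∈ Finset.range (s + 1),
        (-1 : ℚ) ^ t * (Nat.choose t r : ℚ) * (Nat.choose s t : ℚ)
        = ∑ t ∈ Finset.Ico r (s + 1),
        (-1 : ℚ) ^ t * (Nat.choose t r : ℚ) * (Nat.choose s t : ℚ) := by
      rw [← Finset.sum_range_add_sum_Ico _ (by omega : r ≤ s + 1)]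
      have : ∑ t ∈ Finset.range r,
          (-1 : ℚ) ^ t * (Nat.choose t r : ℚ) * (Nat.choose s t : ℚ) = 0 := by
        refine Finset.sum_eq_zero fun t ht => ?_
        have : t < r := Finset.mem_range.mp ht
        simp [Nat.choose_eq_zero_of_lt this]
      rw [this, zero_add]
    rw [hsplit, Finset.sum_Ico_eq_sum_range]
    have hlen : s + 1 - r = (s - r) + 1 := by omega
    rw [hlen]
    have hterm : ∀ u ∈ Finset.range ((s - r) + 1),
        (-1 : ℚ) ^ (r + u) * (Nat.choose (r + u) r : ℚ) * (Nat.choose s (r + u) : ℚ)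
        = ((-1 : ℚ) ^ r * (Nat.choose s r : ℚ)) *
          ((-1 : ℚ) ^ u * (Nat.choose (s - r) u : ℚ)) := by
      intro u hu
      have hu' : u ≤ s - r := by have := Finset.mem_range.mp hu; omega
      have hru : r + u ≤ s := by omega
      have hid := Nat.choose_mul (n := s) (k := r + u) (s := r) (Nat.le_add_right r u)
      rw [Nat.add_sub_cancel_left] at hid
      have hidq : (Nat.choose s (r + u) : ℚ) * (Nat.choose (r + u) r : ℚ)
          = (Nat.choose s r : ℚ) * (Nat.choose (s - r) u : ℚ) := by
        exact_mod_cast congrArg (fun x : ℕ => (x : ℚ)) hid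
      linear_combination ((-1 : ℚ) ^ r * (-1 : ℚ) ^ u) * hidq
    rw [Finset.sum_congr rfl hterm, ← Finset.mul_sum]
    have halt : ∑ u ∈ Finset.range ((s - r) + 1),
        (-1 : ℚ) ^ u * (Nat.choose (s - r) u : ℚ)
        = if s - r = 0 then 1 else 0 := by
      have := Int.alternating_sum_range_choose (n := s - r)
      exact_mod_cast this
    rw [halt]
    by_cases h : r = s
    · subst h
      simp
    · rw [if_neg h, if_neg (by omega), mul_zero]

/-- Factorization of the sum over bounded compositions into a product of sums. -/
lemma crux (n : ℕ) (hn : 0 < n) (π : Fin n → ℕ)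
    (g : Fin n → ℕ → ℚ) (b : Fin n → ℕ)
    (hg : ∀ j t, b j < t → g j t = 0)
    (hble : ∑ j ∈ Finset.univ.erase ⟨0, hn⟩, b j ≤ π ⟨0, hn⟩) :
    ∑ τ : {τ : (j : Fin n) → Fin (π j + 1) // ∑ j, ((τ j : ℕ)) = π ⟨0, hn⟩},
      ∏ j ∈ Finset.univ.erase ⟨0, hn⟩, g j (τ.val j)
    = ∏ j ∈ Finset.univ.erase ⟨0, hn⟩, ∑ t ∈ Finset.range (π j + 1), g j t := by
  classical
  set i0 : Fin n := ⟨0, hn⟩ with hi0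
  have hmem : ∀ x : Fin n, x ∈ Finset.univ.erase i0 ↔ x ≠ i0 := by
    intro x; simp [Finset.mem_erase]
  obtain ⟨T, hT⟩ : ∃ T : ((j : {j : Fin n // j ≠ i0}) → Fin (π j.val + 1)) → ℕ,
      ∀ f, T f = ∑ j : {j : Fin n // j ≠ i0}, (f j : ℕ) :=
    ⟨fun f => ∑ j : {j : Fin n // j ≠ i0}, (f j : ℕ), fun _ => rfl⟩
  -- LHS as a sum over a filtered Finset
  have hLHS : ∑ τ : {τ : (j : Fin n) → Fin (π j + 1) // ∑ j, ((τ j : ℕ)) = π i0},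
      ∏ j ∈ Finset.univ.erase i0, g j (τ.val j)
      = ∑ τ ∈ Finset.univ.filter
          (fun τ : (j : Fin n) → Fin (π j + 1) => ∑ j, ((τ j : ℕ)) = π i0),
        ∏ j ∈ Finset.univ.erase i0, g j (τ j) :=
    (Finset.sum_subtype
      (p := fun τ : (j : Fin n) → Fin (π j + 1) => ∑ j, ((τ j : ℕ)) = π i0)
      (Finset.univ.filter
        (fun τ : (j : Fin n) → Fin (π j + 1) => ∑ j, ((τ j : ℕ)) = π i0))
      (fun x => by simp) (fun τ => ∏ j ∈ Finset.univ.erase i0, g j (τ j))).symm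
  rw [hLHS]
  -- RHS as sum over all restricted tuples
  have hRHS : ∏ j ∈ Finset.univ.erase i0, ∑ t ∈ Finset.range (π j + 1), g j t
      = ∑ f : (j : {j : Fin n // j ≠ i0}) → Fin (π j.val + 1),
          ∏ j : {j : Fin n // j ≠ i0}, g j.val (f j) := by
    have h1 : ∏ j ∈ Finset.univ.erase i0, ∑ t ∈ Finset.range (π j + 1), g j t
        = ∏ j : {j : Fin n // j ≠ i0}, ∑ t ∈ Finset.range (π j.val + 1), g j.val t :=
      Finset.prod_subtype _ hmem _
    have h2 : ∀ j : {j : Fin n // j ≠ i0},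
        ∑ t ∈ Finset.range (π j.val + 1), g j.val t
        = ∑ t : Fin (π j.val + 1), g j.val (t : ℕ) := by
      intro j; rw [Fin.sum_univ_eq_sum_range]
    rw [h1, Finset.prod_congr rfl (fun j _ => h2 j)]
    rw [Finset.prod_univ_sum
      (fun j : {j : Fin n // j ≠ i0} => (Finset.univ : Finset (Fin (π j.val + 1))))
      (fun j t => g j.val (t : ℕ))]
    rw [Fintype.piFinset_univ]
  rw [hRHS]
  -- vanishing beyond the bound
  have hvanish : ∀ f : (j : {j : Fin n // j ≠ i0}) → Fin (π j.val + 1),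
      π i0 < T f → ∏ j : {j : Fin n // j ≠ i0}, g j.val (f j) = 0 := by
    intro f hf
    have hb' : ∑ j : {j : Fin n // j ≠ i0}, b j.val ≤ π i0 := by
      rw [← Finset.sum_subtype _ hmem (fun j => b j)]; exact hble
    have : ∃ j : {j : Fin n // j ≠ i0}, b j.val < (f j : ℕ) := by
      by_contra h
      push_neg at h
      have h2 : ∑ j : {j : Fin n // j ≠ i0}, ((f j : ℕ))
          ≤ ∑ j : {j : Fin n // j ≠ i0}, b j.val :=
        Finset.sum_le_sum (fun j _ => h j)
      rw [hT] at hf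
      omega
    obtain ⟨j, hj⟩ := this
    exact Finset.prod_eq_zero (Finset.mem_univ j) (hg j.val _ hj)
  have hcut : ∑ f : (j : {j : Fin n // j ≠ i0}) → Fin (π j.val + 1),
        ∏ j : {j : Fin n // j ≠ i0}, g j.val (f j)
      = ∑ f ∈ Finset.univ.filter
          (fun f : (j : {j : Fin n // j ≠ i0}) → Fin (π j.val + 1) => T f ≤ π i0),
        ∏ j : {j : Fin n // j ≠ i0}, g j.val (f j) := by
    refine (Finset.sum_subset (Finset.filter_subset _ _) ?_).symm
    intro f _ hf
    have : π i0 < T f := by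
      by_contra h
      exact hf (Finset.mem_filter.mpr ⟨Finset.mem_univ f, by omega⟩)
    exact hvanish f this
  rw [hcut]
  -- the inverse map, kept opaque with a value specification
  obtain ⟨Jmap, hJval⟩ : ∃ Jmap : ((j : {j : Fin n // j ≠ i0}) → Fin (π j.val + 1)) →
      (k : Fin n) → Fin (π k + 1),
      ∀ f k, ((Jmap f k : ℕ))
        = if h : k = i0 then π i0 - T f else (f ⟨k, h⟩ : ℕ) := by
    have hbound : ∀ (f : (j : {j : Fin n // j ≠ i0}) → Fin (π j.val + 1)) (k : Fin n),
        (if h : k = i0 then π i0 - T f else (f ⟨k, h⟩ : ℕ)) < π k + 1 := by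
      intro f k
      split_ifs with h
      · subst h; omega
      · exact (f ⟨k, h⟩).isLt
    exact ⟨fun f k => ⟨if h : k = i0 then π i0 - T f else (f ⟨k, h⟩ : ℕ), hbound f k⟩,
      fun f k => rfl⟩
  refine Finset.sum_nbij'
    (fun (τ : (j : Fin n) → Fin (π j + 1)) =>
      fun j : {j : Fin n // j ≠ i0} => τ j.val)
    Jmap ?_ ?_ ?_ ?_ ?_
  · -- hi
    intro τ hτ
    have hτ' : ∑ j, ((τ j : ℕ)) = π i0 := (Finset.mem_filter.mp hτ).2
    refine Finset.mem_filter.mpr ⟨Finset.mem_univ _, ?_⟩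
    have hadd : (τ i0 : ℕ) + ∑ j ∈ Finset.univ.erase i0, (τ j : ℕ)
        = ∑ j, (τ j : ℕ) :=
      Finset.add_sum_erase Finset.univ (fun j => ((τ j : ℕ))) (Finset.mem_univ i0)
    have hTτ : T (fun j : {j : Fin n // j ≠ i0} => τ j.val)
        = ∑ j ∈ Finset.univ.erase i0, (τ j : ℕ) := by
      rw [hT]; exact (Finset.sum_subtype _ hmem (fun j => ((τ j : ℕ)))).symm
    rw [hTτ]
    omega
  · -- hj
    intro f hf
    have hf' : T f ≤ π i0 := (Finset.mem_filter.mp hf).2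
    refine Finset.mem_filter.mpr ⟨Finset.mem_univ _, ?_⟩
    show ∑ j, ((Jmap f j : ℕ)) = π i0
    have hadd : (Jmap f i0 : ℕ) + ∑ j ∈ Finset.univ.erase i0, (Jmap f j : ℕ)
        = ∑ j, (Jmap f j : ℕ) :=
      Finset.add_sum_erase Finset.univ (fun j => ((Jmap f j : ℕ))) (Finset.mem_univ i0)
    have h0 : ((Jmap f i0 : ℕ)) = π i0 - T f := by
      rw [hJval]; exact dif_pos rfl
    have hrest : ∑ j ∈ Finset.univ.erase i0, ((Jmap f j : ℕ)) = T f := by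
      rw [Finset.sum_subtype _ hmem (fun j => ((Jmap f j : ℕ)))]
      rw [hT]
      refine Finset.sum_congr rfl fun j _ => ?_
      rw [hJval, dif_neg j.2]
    omega
  · -- left inverse
    intro τ hτ
    have hτ' : ∑ j, ((τ j : ℕ)) = π i0 := (Finset.mem_filter.mp hτ).2
    funext k
    apply Fin.ext
    show ((Jmap (fun j : {j : Fin n // j ≠ i0} => τ j.val) k : ℕ)) = (τ k : ℕ)
    rw [hJval]
    split_ifs with h
    · subst h
      have hadd : (τ i0 : ℕ) + ∑ j ∈ Finset.univ.erase i0, (τ j : ℕ)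
          = ∑ j, (τ j : ℕ) :=
        Finset.add_sum_erase Finset.univ (fun j => ((τ j : ℕ))) (Finset.mem_univ i0)
      have hTτ : T (fun j : {j : Fin n // j ≠ i0} => τ j.val)
          = ∑ j ∈ Finset.univ.erase i0, (τ j : ℕ) := by
        rw [hT]; exact (Finset.sum_subtype _ hmem (fun j => ((τ j : ℕ)))).symm
      rw [hTτ]
      omega
    · rfl
  · -- right inverse
    intro f hf
    funext j
    apply Fin.ext
    show ((Jmap f j.val : ℕ)) = (f j : ℕ)
    rw [hJval, dif_neg j.2]
  · -- values agree
    intro τ hτ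
    exact Finset.prod_subtype _ hmem (fun j => g j (τ j))

theorem stmt6 (n : ℕ) (hn : 0 < n) (π : Fin n → ℕ) (hπ : 1 ≤ π ⟨0, hn⟩)
    (M : Matrix {τ : (j : Fin n) → Fin (π j + 1) // ∑ j, ((τ j : ℕ)) = π ⟨0, hn⟩}
                {τ : (j : Fin n) → Fin (π j + 1) // ∑ j, ((τ j : ℕ)) = π ⟨0, hn⟩} ℚ)
    (hM : ∀ ρ τ, M ρ τ =
      (-1) ^ (π ⟨0, hn⟩ - (ρ.val ⟨0, hn⟩ : ℕ)) *
        ∏ j ∈ Finset.univ.erase ⟨0, hn⟩,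
          (Nat.choose (τ.val j : ℕ) (ρ.val j : ℕ) : ℚ)) :
    M * M = 1 := by
  classical
  ext ρ σ
  rw [Matrix.mul_apply, Matrix.one_apply]
  have hexp : ∀ τ : {τ : (j : Fin n) → Fin (π j + 1) // ∑ j, ((τ j : ℕ)) = π ⟨0, hn⟩},
      π ⟨0, hn⟩ - (τ.val ⟨0, hn⟩ : ℕ)
        = ∑ j ∈ Finset.univ.erase ⟨0, hn⟩, (τ.val j : ℕ) := by
    intro τ
    have h := τ.2
    have hadd : (τ.val ⟨0, hn⟩ : ℕ) + ∑ j ∈ Finset.univ.erase ⟨0, hn⟩, (τ.val j : ℕ)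
        = ∑ j, (τ.val j : ℕ) :=
      Finset.add_sum_erase Finset.univ (fun j => ((τ.val j : ℕ)))
        (Finset.mem_univ (⟨0, hn⟩ : Fin n))
    omega
  set A : ℕ := ∑ j ∈ Finset.univ.erase ⟨0, hn⟩, (ρ.val j : ℕ) with hA
  set g : Fin n → ℕ → ℚ := fun j t =>
    (-1 : ℚ) ^ t * (Nat.choose t (ρ.val j : ℕ) : ℚ) * (Nat.choose (σ.val j : ℕ) t : ℚ)
    with hg
  have hterm : ∀ τ : {τ : (j : Fin n) → Fin (π j + 1) // ∑ j, ((τ j : ℕ)) = π ⟨0, hn⟩},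
      M ρ τ * M τ σ
        = (-1 : ℚ) ^ A * ∏ j ∈ Finset.univ.erase ⟨0, hn⟩, g j (τ.val j) := by
    intro τ
    rw [hM ρ τ, hM τ σ, hexp ρ, hexp τ, ← hA]
    simp only [hg, Finset.prod_mul_distrib, ← Finset.prod_pow_eq_pow_sum]
    ring
  rw [Finset.sum_congr rfl (fun τ _ => hterm τ), ← Finset.mul_sum]
  have hble : ∑ j ∈ Finset.univ.erase ⟨0, hn⟩, (σ.val j : ℕ) ≤ π ⟨0, hn⟩ := by
    have h := σ.2
    have hadd : (σ.val ⟨0, hn⟩ : ℕ) + ∑ j ∈ Finset.univ.erase ⟨0, hn⟩, (σ.val j : ℕ)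
        = ∑ j, (σ.val j : ℕ) :=
      Finset.add_sum_erase Finset.univ (fun j => ((σ.val j : ℕ)))
        (Finset.mem_univ (⟨0, hn⟩ : Fin n))
    omega
  have hgz : ∀ j t, (σ.val j : ℕ) < t → g j t = 0 := by
    intro j t ht
    simp [hg, Nat.choose_eq_zero_of_lt ht]
  rw [crux n hn π g (fun j => (σ.val j : ℕ)) hgz hble]
  have hfac : ∀ j ∈ Finset.univ.erase (⟨0, hn⟩ : Fin n),
      ∑ t ∈ Finset.range (π j + 1), g j t
      = if (ρ.val j : ℕ) = (σ.val j : ℕ) then (-1 : ℚ) ^ (σ.val j : ℕ) else 0 := by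
    intro j _
    have hs : (σ.val j : ℕ) ≤ π j := by omega
    exact key_binom (π j) (ρ.val j : ℕ) (σ.val j : ℕ) hs
  rw [Finset.prod_congr rfl hfac]
  by_cases h : ρ = σ
  · subst h
    rw [if_pos rfl]
    have hprod : ∏ j ∈ Finset.univ.erase (⟨0, hn⟩ : Fin n),
        (if (ρ.val j : ℕ) = (ρ.val j : ℕ) then (-1 : ℚ) ^ (ρ.val j : ℕ) else 0)
        = (-1 : ℚ) ^ A := by
      rw [hA, ← Finset.prod_pow_eq_pow_sum]
      exact Finset.prod_congr rfl fun j _ => if_pos rfl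
    rw [hprod, ← pow_add]
    exact Even.neg_one_pow ⟨A, rfl⟩
  · rw [if_neg h]
    have hne : ∃ j ∈ Finset.univ.erase (⟨0, hn⟩ : Fin n),
        (ρ.val j : ℕ) ≠ (σ.val j : ℕ) := by
      by_contra hc
      push_neg at hc
      apply h
      have h0 : (ρ.val ⟨0, hn⟩ : ℕ) = (σ.val ⟨0, hn⟩ : ℕ) := by
        have haddρ : (ρ.val ⟨0, hn⟩ : ℕ)
              + ∑ j ∈ Finset.univ.erase ⟨0, hn⟩, (ρ.val j : ℕ)
            = ∑ j, (ρ.val j : ℕ) :=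
          Finset.add_sum_erase Finset.univ (fun j => ((ρ.val j : ℕ)))
            (Finset.mem_univ (⟨0, hn⟩ : Fin n))
        have haddσ : (σ.val ⟨0, hn⟩ : ℕ)
              + ∑ j ∈ Finset.univ.erase ⟨0, hn⟩, (σ.val j : ℕ)
            = ∑ j, (σ.val j : ℕ) :=
          Finset.add_sum_erase Finset.univ (fun j => ((σ.val j : ℕ)))
            (Finset.mem_univ (⟨0, hn⟩ : Fin n))
        have hsame : ∑ j ∈ Finset.univ.erase (⟨0, hn⟩ : Fin n), (ρ.val j : ℕ)
            = ∑ j ∈ Finset.univ.erase (⟨0, hn⟩ : Fin n), (σ.val j : ℕ) :=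
          Finset.sum_congr rfl hc
        have hρ2 := ρ.2
        have hσ2 := σ.2
        omega
      apply Subtype.ext
      funext j
      apply Fin.ext
      by_cases hj : j = (⟨0, hn⟩ : Fin n)
      · subst hj; exact h0
      · exact hc j (Finset.mem_erase.mpr ⟨hj, Finset.mem_univ j⟩)
    obtain ⟨j, hj, hne⟩ := hne
    rw [mul_eq_zero]
    right
    exact Finset.prod_eq_zero hj (if_neg hne)
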